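/- Consider the hybrid decoding algorithm with hard decision decoders as pre- and post-decoders. Let n be a positive integer, C ⊆ {0,1}^n a code, t_c a natural number, and let (Ω, P) be a probability space carrying random variables X : Ω → C (the transmitted codeword) and Y : Ω → ℝ^n (the received vector), with all maps below measurable. Let g : ℝ^n → {0,1}^n be the ECCT codeword-estimate map and model the pre-decoder as f_pre : ℝ^n → Option({0,1}^n), where f_pre(y) = some c means the pre-decoder outputs the codeword c and f_pre(y) = none means it declares failure (nonzero syndrome) and passes y on. Assume: (i) almost surely, if d_H(X, Ỹ) ≤ t_c then f_pre(Y) = some X (the pre-decoder corrects all error patterns of weight at most t_c); (ii) almost surely, the post-decoder f_post : {0,1}^n → {0,1}^n satisfies f_post(g(Y)) = X when d_H(X, g(Y)) ≤ t_c and f_post(g(Y)) = g(Y) when d_H(X, g(Y)) > t_c (the post-decoder corrects exactly the patterns with at most t_c residual errors and otherwise returns its input). Define the hybrid output X̂ = c if f_pre(Y) = some c, and X̂ = f_post(g(Y)) if f_pre(Y) = none. Let P_dd = P(f_pre(Y) = none) (decoding failure probability for detected errors) and P_bu = E[ d_H(X, X̂) · 1{f_pre(Y) = some c for some c ≠ X}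 ] (bit error probability due to undetected errors of the pre-decoder). Then E[ d_H(X, X̂) ] = P_dd · E[ u( d_H(X, g(Y)) − t_c ) · d_H(X, g(Y)) | f_pre(Y) = none ] + P_bu. -/

import Mathlib

open MeasureTheory Real

/-- `sgn α = 1` if `α ≥ 0` and `−1` otherwise. -/
noncomputable def sgn (α : ℝ) : ℝ := if 0 ≤ α then 1 else -1

/-- `bin α = (1 − α)/2`. -/
noncomputable def bin (α : ℝ) : ℝ := (1 - α) / 2

/-- `hardBit α` is the Boolean encoding (false ↔ 0, true ↔ 1) of `bin (sgn α)`. -/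
noncomputable def hardBit (α : ℝ) : Bool := if 0 ≤ α then false else true

/-- Real value of a bit (false ↔ 0, true ↔ 1). -/
def bitVal (b : Bool) : ℝ := if b then 1 else 0

/-- The step function `u`: `u α = 0` if `α ≤ 0` and `1` otherwise. -/
noncomputable def stepu (α : ℝ) : ℝ := if α ≤ 0 then 0 else 1

/-- The sigmoid `σ α = 1/(1 + e^{−α})`. -/
noncomputable def sigm (α : ℝ) : ℝ := 1 / (1 + Real.exp (-α))

/-- The 0–1 loss. -/
noncomputable def l01 (α : ℝ) : ℝ := if α ≤ 0 then 1 else 0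

/-- Binary cross entropy loss `l_BCE(x, w)` with binarized multiplicative noise
`z̃ᵢ = bin (sgn ((1 − 2 xᵢ) yᵢ))`, natural logarithms. -/
noncomputable def lBCE (n : ℕ) (x : Fin n → Bool) (y : Fin n → ℝ) (w : Fin n → ℝ) : ℝ :=
  -∑ i, (bin (sgn ((1 - 2 * bitVal (x i)) * y i)) * Real.log (1 - sigm (w i))
        + (1 - bin (sgn ((1 - 2 * bitVal (x i)) * y i))) * Real.log (sigm (w i)))

set_option maxHeartbeats 1000000 in
/-- Lemma 1: for the hybrid decoder with hard decision pre- and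
post-decoders, with hybrid output `X̂ = (f_pre Y).getD (f_post (g Y))`,
`E[d_H(X, X̂)] = P_dd · E[u(d_H(X, g Y) − t_c) · d_H(X, g Y) | f_pre Y = none] + P_bu`,
where `P_dd = P(f_pre Y = none)` and
`P_bu = E[d_H(X, X̂) · 1{f_pre Y = some c for some c ≠ X}]`. -/
theorem hybrid_decoder_expected_error
    {Ω : Type*} [MeasurableSpace Ω] (P : Measure Ω) [IsProbabilityMeasure P]
    (n : ℕ) (hn : 0 < n) (C : Set (Fin n → Bool)) (tc : ℕ)
    (X : Ω → Fin n → Bool) (Y : Ω → Fin n → ℝ)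
    (hXC : ∀ ω, X ω ∈ C)
    (g : (Fin n → ℝ) → Fin n → Bool)
    (fpre : (Fin n → ℝ) → Option (Fin n → Bool))
    (fpost : (Fin n → Bool) → Fin n → Bool)
    (hmX : Measurable X) (hmY : Measurable Y)
    (hmg : Measurable fun ω => g (Y ω))
    (hmnone : MeasurableSet {ω | fpre (Y ω) = none})
    (hmsome : ∀ c : Fin n → Bool, MeasurableSet {ω | fpre (Y ω) = some c})
    (hmhat : Measurable fun ω => (fpre (Y ω)).getD (fpost (g (Y ω))))
    -- (i) a.s. the pre-decoder corrects every pattern of at most t_c errors,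
    -- where Ỹ = bin (sign Y) componentwise is the hard decision of Y:
    (hpre : ∀ᵐ ω ∂P,
      hammingDist (X ω) (fun i => hardBit (Y ω i)) ≤ tc → fpre (Y ω) = some (X ω))
    -- (ii) a.s. the post-decoder corrects exactly the patterns of at most t_c errors
    -- and otherwise returns its input:
    (hpost : ∀ᵐ ω ∂P,
      (hammingDist (X ω) (g (Y ω)) ≤ tc → fpost (g (Y ω)) = X ω) ∧
      (tc < hammingDist (X ω) (g (Y ω)) → fpost (g (Y ω)) = g (Y ω))) :
    ∫ ω, (hammingDist (X ω) ((fpre (Y ω)).getD (fpost (g (Y ω)))) : ℝ) ∂P =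
      (P {ω | fpre (Y ω) = none}).toReal *
        (∫ ω, stepu ((hammingDist (X ω) (g (Y ω)) : ℝ) - (tc : ℝ)) *
            (hammingDist (X ω) (g (Y ω)) : ℝ)
          ∂(ProbabilityTheory.cond P {ω | fpre (Y ω) = none})) +
      ∫ ω in {ω | ∃ c, c ≠ X ω ∧ fpre (Y ω) = some c},
        (hammingDist (X ω) ((fpre (Y ω)).getD (fpost (g (Y ω)))) : ℝ) ∂P := by
    classical
  set A := {ω | fpre (Y ω) = none} with hAdef
  set B := {ω | fpre (Y ω) = some (X ω)} with hBdef
  set D := {ω | ∃ c, c ≠ X ω ∧ fpre (Y ω) = some c} with hDdef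
  set f : Ω → ℝ := fun ω => (hammingDist (X ω) ((fpre (Y ω)).getD (fpost (g (Y ω)))) : ℝ)
    with hfdef
  set q : Ω → ℝ := fun ω =>
    stepu ((hammingDist (X ω) (g (Y ω)) : ℝ) - (tc : ℝ)) * (hammingDist (X ω) (g (Y ω)) : ℝ)
    with hqdef
  have hmB : MeasurableSet B := by
    have : B = ⋃ c : Fin n → Bool, ({ω | X ω = c} ∩ {ω | fpre (Y ω) = some c}) := by
      ext ω
      simp only [hBdef, Set.mem_setOf_eq, Set.mem_iUnion, Set.mem_inter_iff]
      constructor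
      · intro h; exact ⟨X ω, rfl, h⟩
      · rintro ⟨c, hc, h⟩; rw [hc]; exact h
    rw [this]
    exact MeasurableSet.iUnion fun c =>
      (hmX (measurableSet_singleton c)).inter (hmsome c)
  have hDeq : D = Aᶜ ∩ Bᶜ := by
    ext ω
    simp only [hDdef, hAdef, hBdef, Set.mem_setOf_eq, Set.mem_inter_iff, Set.mem_compl_iff]
    cases h : fpre (Y ω) with
    | none => simp
    | some c =>
      simp only [Option.some.injEq, reduceCtorEq, not_false_iff, true_and]
      constructor
      · rintro ⟨c', hne, rfl⟩; intro hcx; exact hne (by rw [hcx])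
      · intro hne; exact ⟨c, fun h => hne (by rw [h]), rfl⟩
  have hmD : MeasurableSet D := by rw [hDeq]; exact hmnone.compl.inter hmB.compl
  -- measurability of f and q
  have hmf : Measurable f := by
    have h1 : Measurable fun ω => (X ω, (fpre (Y ω)).getD (fpost (g (Y ω)))) :=
      hmX.prodMk hmhat
    have h2 := (measurable_of_countable
      (fun p : (Fin n → Bool) × (Fin n → Bool) => (hammingDist p.1 p.2 : ℝ))).comp h1
    simpa [hfdef, Function.comp_def] using h2
  have hmq : Measurable q := by
    have h1 : Measurable fun ω => (X ω, g (Y ω)) := hmX.prodMk hmg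
    have h2 := (measurable_of_countable
      (fun p : (Fin n → Bool) × (Fin n → Bool) =>
        stepu ((hammingDist p.1 p.2 : ℝ) - (tc : ℝ)) * (hammingDist p.1 p.2 : ℝ))).comp h1
    simpa [hqdef, Function.comp_def] using h2
  have hfbd : ∀ ω, ‖f ω‖ ≤ (n : ℝ) := by
    intro ω
    have h : hammingDist (X ω) ((fpre (Y ω)).getD (fpost (g (Y ω)))) ≤ n := by
      simpa using (hammingDist_le_card_fintype
        (x := X ω) (y := (fpre (Y ω)).getD (fpost (g (Y ω)))))
    simp only [hfdef, Real.norm_eq_abs, Nat.abs_cast]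
    exact_mod_cast h
  have hqbd : ∀ ω, ‖q ω‖ ≤ (n : ℝ) := by
    intro ω
    have hd : (hammingDist (X ω) (g (Y ω)) : ℝ) ≤ n := by
      have h : hammingDist (X ω) (g (Y ω)) ≤ n := by
        simpa using (hammingDist_le_card_fintype (x := X ω) (y := g (Y ω)))
      exact_mod_cast h
    have hs : stepu ((hammingDist (X ω) (g (Y ω)) : ℝ) - (tc : ℝ)) ≤ 1 := by
      unfold stepu; split <;> norm_num
    have hs0 : 0 ≤ stepu ((hammingDist (X ω) (g (Y ω)) : ℝ) - (tc : ℝ)) := by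
      unfold stepu; split <;> norm_num
    simp only [hqdef, Real.norm_eq_abs]
    rw [abs_of_nonneg (by positivity)]
    calc stepu _ * (hammingDist (X ω) (g (Y ω)) : ℝ) ≤ 1 * (hammingDist (X ω) (g (Y ω)) : ℝ) :=
          mul_le_mul_of_nonneg_right hs (by positivity)
      _ = _ := one_mul _
      _ ≤ (n : ℝ) := hd
  have hintf : Integrable f P :=
    ⟨hmf.aestronglyMeasurable, HasFiniteIntegral.of_bounded (Filter.Eventually.of_forall hfbd)⟩
  have hintq : Integrable q P :=
    ⟨hmq.aestronglyMeasurable, HasFiniteIntegral.of_bounded (Filter.Eventually.of_forall hqbd)⟩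
  -- ∫_A f = ∫_A q
  have hAcong : ∫ ω in A, f ω ∂P = ∫ ω in A, q ω ∂P := by
    apply setIntegral_congr_ae hmnone
    filter_upwards [hpost] with ω h hA
    have hnone : fpre (Y ω) = none := hA
    simp only [hfdef, hqdef, hnone, Option.getD_none]
    by_cases hle : hammingDist (X ω) (g (Y ω)) ≤ tc
    · rw [h.1 hle, hammingDist_self]
      have : ((hammingDist (X ω) (g (Y ω)) : ℝ) - (tc : ℝ)) ≤ 0 := by
        have : (hammingDist (X ω) (g (Y ω)) : ℝ) ≤ (tc : ℝ) := by exact_mod_cast hle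
        linarith
      simp [stepu, this]
    · push_neg at hle
      rw [h.2 hle]
      have : ¬ ((hammingDist (X ω) (g (Y ω)) : ℝ) - (tc : ℝ) ≤ 0) := by
        have : (tc : ℝ) < (hammingDist (X ω) (g (Y ω)) : ℝ) := by exact_mod_cast hle
        linarith
      simp [stepu, this]
  -- cond term
  have hcond : (P A).toReal * (∫ ω, q ω ∂(ProbabilityTheory.cond P A)) = ∫ ω in A, q ω ∂P := by
    by_cases hPA : P A = 0
    · rw [hPA]
      simp [Measure.restrict_eq_zero.mpr hPA]
    · rw [ProbabilityTheory.cond, integral_smul_measure, smul_eq_mul, ← mul_assoc,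
        ENNReal.toReal_inv, mul_inv_cancel₀ (ENNReal.toReal_ne_zero.mpr ⟨hPA, measure_ne_top P A⟩),
        one_mul]
  -- ∫_B f = 0
  have hBzero : ∫ ω in B, f ω ∂P = 0 := by
    apply setIntegral_eq_zero_of_forall_eq_zero
    intro ω hω
    have : fpre (Y ω) = some (X ω) := hω
    simp [hfdef, this]
  -- decomposition
  have hcompl : Aᶜ = B ∪ D := by
    ext ω
    simp only [hAdef, hBdef, hDdef, Set.mem_union, Set.mem_compl_iff, Set.mem_setOf_eq]
    constructor
    · intro hA
      rcases hop : fpre (Y ω) with _ | c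
      · exact absurd hop hA
      · by_cases hc : c = X ω
        · left; rw [hc]
        · right; exact ⟨c, hc, rfl⟩
    · rintro (hB | ⟨c, hc, hsome⟩) hA
      · rw [hA] at hB; exact Option.some_ne_none _ hB.symm
      · rw [hA] at hsome; exact Option.some_ne_none _ hsome.symm
  have hdisj : Disjoint B D := by
    rw [hDeq]
    exact Set.disjoint_left.mpr fun ω hB hD => hD.2 hB
  calc ∫ ω, f ω ∂P = (∫ ω in A, f ω ∂P) + ∫ ω in Aᶜ, f ω ∂P :=
        (integral_add_compl hmnone hintf).symm
    _ = (∫ ω in A, f ω ∂P) + ((∫ ω in B, f ω ∂P) + ∫ ω in D, f ω ∂P) := by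
        rw [hcompl, setIntegral_union hdisj hmD hintf.integrableOn hintf.integrableOn]
    _ = (P A).toReal * (∫ ω, q ω ∂(ProbabilityTheory.cond P A)) + ∫ ω in D, f ω ∂P := by
        rw [hBzero, zero_add, hAcong, hcond]
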